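/- (Partial completeness of Unwinding I) If the quantum system 𝕊 is secure with respect to policy ↝, i.e. K(𝕊,↝) = 0, then for each agent a ∈ A there exists an equivalence relation ∼ₐ on reachable density operators satisfying: (step consistency) ρ ∼ₐ σ implies 𝓔_{b,c}(ρ) ∼ₐ 𝓔_{b,c}(σ) for all b ∈ A, c ∈ C; (observation consistency) ρ ∼ₐ σ implies d_a(ρ,σ) = 0; and (local respect of ↝) ¬(b ↝ a) implies ρ ∼ₐ 𝓔_{b,c}(ρ) for all c ∈ C and all reachable ρ. -/

import Mathlib

open scoped Classical ComplexOrder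
open Matrix Kronecker

noncomputable section

/-- A density operator: positive semidefinite with trace 1. -/
def IsDensity {d : Type} [Fintype d] [DecidableEq d] (ρ : Matrix d d ℂ) : Prop :=
  ρ.PosSemidef ∧ ρ.trace = 1

/-- A super-operator: a linear, positive, trace-preserving map on matrices. -/
def IsSuperOp {d : Type} [Fintype d] [DecidableEq d]
    (F : Matrix d d ℂ → Matrix d d ℂ) : Prop :=
  IsLinearMap ℂ F ∧ (∀ ρ : Matrix d d ℂ, ρ.PosSemidef → (F ρ).PosSemidef) ∧
    (∀ ρ : Matrix d d ℂ, (F ρ).trace = ρ.trace)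

/-- A finite family of matrices (the data of a measurement). -/
structure PMeas (d : Type) where
  m : ℕ
  E : Fin m → Matrix d d ℂ

/-- The family is a POVM: positive semidefinite elements summing to the identity. -/
def PMeas.IsPOVM {d : Type} [Fintype d] [DecidableEq d] (P : PMeas d) : Prop :=
  (∀ i, (P.E i).PosSemidef) ∧ ∑ i, P.E i = 1

/-- The distance between outcome distributions of a measurement on two states. -/
def dE {d : Type} [Fintype d] (P : PMeas d) (ρ σ : Matrix d d ℂ) : ℝ :=
  (1 / 2) * ∑ i, ‖(P.E i * ρ).trace - (P.E i * σ).trace‖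

/-- The measurement pseudo-distance induced by a set of measurements. -/
def dM {d : Type} [Fintype d] (M : Set (PMeas d)) (ρ σ : Matrix d d ℂ) : ℝ :=
  sSup { x | ∃ P ∈ M, x = dE P ρ σ }

/-- A quantum system: initial state, agents, commands, super-operators, measurements. -/
structure QSystem (Agent Cmd d : Type) where
  ρ0 : Matrix d d ℂ
  A : Set Agent
  C : Set Cmd
  Ecmd : Agent → Cmd → Matrix d d ℂ → Matrix d d ℂ
  M : Agent → Set (PMeas d)

/-- Well-formedness: the initial state is a density operator, commands act as
super-operators, and agents measure with POVMs. -/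
def QSystem.WellFormed {Agent Cmd d : Type} [Fintype d] [DecidableEq d]
    (S : QSystem Agent Cmd d) : Prop :=
  IsDensity S.ρ0 ∧ (∀ a ∈ S.A, ∀ c ∈ S.C, IsSuperOp (S.Ecmd a c)) ∧
    (∀ a ∈ S.A, ∀ P ∈ S.M a, P.IsPOVM)

/-- Execution of a finite action sequence (composition of super-operators, in order). -/
def QSystem.run {Agent Cmd d : Type} (S : QSystem Agent Cmd d)
    (α : List (Agent × Cmd)) (ρ : Matrix d d ℂ) : Matrix d d ℂ :=
  α.foldl (fun τ p => S.Ecmd p.1 p.2 τ) ρ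

/-- A sequence over A × C. -/
def QSystem.Valid {Agent Cmd d : Type} (S : QSystem Agent Cmd d)
    (α : List (Agent × Cmd)) : Prop :=
  ∀ p ∈ α, p.1 ∈ S.A ∧ p.2 ∈ S.C

/-- `purge G D α` deletes from `α` every pair `(a, c)` with `a ∈ G` and `c ∈ D`. -/
def purge {Agent Cmd : Type} (G : Set Agent) (D : Set Cmd) :
    List (Agent × Cmd) → List (Agent × Cmd)
  | [] => []
  | p :: rest => if p.1 ∈ G ∧ p.2 ∈ D then purge G D rest else p :: purge G D rest

/-- A reachable density operator. -/
def QSystem.Reachable {Agent Cmd d : Type} (S : QSystem Agent Cmd d)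
    (ρ : Matrix d d ℂ) : Prop :=
  ∃ α, S.Valid α ∧ S.run α S.ρ0 = ρ

/-- `∇ a`: the set of agents from which information may not flow to `a`. -/
def nabla {Agent : Type} (pol : Agent → Agent → Prop) (a : Agent) : Set Agent :=
  { b | ¬ pol b a }

/-- The security degree `K(𝕊,↝)`. -/
def Kdeg {Agent Cmd d : Type} [Fintype d] (S : QSystem Agent Cmd d)
    (pol : Agent → Agent → Prop) : ℝ :=
  sSup { x | ∃ a ∈ S.A, ∃ α, S.Valid α ∧
    x = dM (S.M a) (S.run α S.ρ0) (S.run (purge (nabla pol a) Set.univ α) S.ρ0) }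

/-- The `t`-bounded security degree `K_t(𝕊,↝)`. -/
def Kt {Agent Cmd d : Type} [Fintype d] (S : QSystem Agent Cmd d)
    (pol : Agent → Agent → Prop) (t : ℕ) : ℝ :=
  sSup { x | ∃ a ∈ S.A, ∃ α, S.Valid α ∧ α.length ≤ t ∧
    x = dM (S.M a) (S.run α S.ρ0) (S.run (purge (nabla pol a) Set.univ α) S.ρ0) }

/-- The interference degree `Int(G₁, D | G₂)`. -/
def IntDeg {Agent Cmd d : Type} [Fintype d] (S : QSystem Agent Cmd d)
    (G1 : Set Agent) (D : Set Cmd) (G2 : Set Agent) : ℝ :=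
  sSup { x | ∃ a ∈ G2, ∃ α, S.Valid α ∧
    x = dM (S.M a) (S.run α S.ρ0) (S.run (purge G1 D α) S.ρ0) }

/-- Square root of a positive semidefinite matrix (as in the older Mathlib). -/
def Matrix.PosSemidef.sqrt {d : Type} [Fintype d] [DecidableEq d] {A : Matrix d d ℂ}
    (hA : A.PosSemidef) : Matrix d d ℂ :=
  hA.1.eigenvectorUnitary.1 * diagonal ((↑) ∘ Real.sqrt ∘ hA.1.eigenvalues) *
    (star hA.1.eigenvectorUnitary : Matrix d d ℂ)

/-- Trace distance `d(ρ,σ) = (1/2)·tr √((ρ−σ)†(ρ−σ))`. -/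
def traceDist {d : Type} [Fintype d] [DecidableEq d] (ρ σ : Matrix d d ℂ) : ℝ :=
  (1 / 2) * ((Matrix.posSemidef_conjTranspose_mul_self (ρ - σ)).sqrt.trace).re

end
noncomputable section

namespace UnwindAux

open Matrix

variable {d : Type} [Fintype d] [DecidableEq d]

lemma psd_diag_nonneg {M : Matrix d d ℂ} (h : M.PosSemidef) (i : d) : 0 ≤ M i i := by
  exact h.diag_nonneg

lemma psd_trace_nonneg {M : Matrix d d ℂ} (h : M.PosSemidef) : 0 ≤ M.trace :=
  Finset.sum_nonneg fun i _ => psd_diag_nonneg h i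

open scoped MatrixOrder in
lemma trace_mul_psd_nonneg {A B : Matrix d d ℂ} (hA : A.PosSemidef) (hB : B.PosSemidef) :
    0 ≤ (A * B).trace := by
  have h1 : A * B = CFC.sqrt A * (CFC.sqrt A * B) := by
    rw [← mul_assoc, CFC.sqrt_mul_sqrt_self A hA.nonneg]
  rw [h1, Matrix.trace_mul_comm]
  have hpsd : ((CFC.sqrt A)ᴴ * B * CFC.sqrt A).PosSemidef :=
    hB.conjTranspose_mul_mul_same (CFC.sqrt A)
  rw [(CFC.sqrt_nonneg A).posSemidef.1.eq, mul_assoc] at hpsd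
  exact psd_trace_nonneg (by rwa [← mul_assoc] at hpsd)

lemma cabs_of_nonneg {z : ℂ} (h : 0 ≤ z) : ‖z‖ = z.re := by
  rw [Complex.nonneg_iff] at h
  rw [Complex.norm_def, Complex.normSq_apply, ← h.2]
  simp [← pow_two, Real.sqrt_sq h.1]

lemma dE_nonneg {P : PMeas d} {ρ σ : Matrix d d ℂ} : 0 ≤ dE P ρ σ := by
  unfold dE
  positivity

/-- For a POVM, the outcome probabilities on a density operator sum to 1 and the
absolute values sum to 1. -/
lemma sum_abs_trace_eq_one {P : PMeas d} (hP : P.IsPOVM) {ρ : Matrix d d ℂ}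
    (hρ : IsDensity ρ) : ∑ i, ‖(P.E i * ρ).trace‖ = 1 := by
  have hnn : ∀ i, 0 ≤ (P.E i * ρ).trace := fun i => trace_mul_psd_nonneg (hP.1 i) hρ.1
  have hsum : ∑ i, (P.E i * ρ).trace = 1 := by
    rw [← Matrix.trace_sum, ← Finset.sum_mul, hP.2, one_mul, hρ.2]
  have : ∑ i, ‖(P.E i * ρ).trace‖ = ∑ i, ((P.E i * ρ).trace).re := by
    exact Finset.sum_congr rfl fun i _ => cabs_of_nonneg (hnn i)
  rw [this, ← Complex.re_sum, hsum, Complex.one_re]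

lemma dE_le_one {P : PMeas d} (hP : P.IsPOVM) {ρ σ : Matrix d d ℂ}
    (hρ : IsDensity ρ) (hσ : IsDensity σ) : dE P ρ σ ≤ 1 := by
  unfold dE
  have h1 : ∑ i, ‖(P.E i * ρ).trace - (P.E i * σ).trace‖ ≤
      ∑ i, (‖(P.E i * ρ).trace‖ + ‖(P.E i * σ).trace‖) :=
    Finset.sum_le_sum fun i _ => norm_sub_le _ _
  rw [Finset.sum_add_distrib, sum_abs_trace_eq_one hP hρ, sum_abs_trace_eq_one hP hσ] at h1
  linarith

lemma dM_le_one {M : Set (PMeas d)} (hM : ∀ P ∈ M, P.IsPOVM) {ρ σ : Matrix d d ℂ}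
    (hρ : IsDensity ρ) (hσ : IsDensity σ) : dM M ρ σ ≤ 1 := by
  refine Real.sSup_le (fun x hx => ?_) zero_le_one
  obtain ⟨P, hP, rfl⟩ := hx
  exact dE_le_one (hM P hP) hρ hσ

lemma dM_nonneg {M : Set (PMeas d)} {ρ σ : Matrix d d ℂ} : 0 ≤ dM M ρ σ :=
  Real.sSup_nonneg fun x hx => by obtain ⟨P, _, rfl⟩ := hx; exact dE_nonneg

lemma dM_bddAbove {M : Set (PMeas d)} (hM : ∀ P ∈ M, P.IsPOVM) {ρ σ : Matrix d d ℂ}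
    (hρ : IsDensity ρ) (hσ : IsDensity σ) :
    BddAbove { x | ∃ P ∈ M, x = dE P ρ σ } :=
  ⟨1, fun x hx => by obtain ⟨P, hP, rfl⟩ := hx; exact dE_le_one (hM P hP) hρ hσ⟩

lemma dE_eq_zero_of_dM {M : Set (PMeas d)} (hM : ∀ P ∈ M, P.IsPOVM) {ρ σ : Matrix d d ℂ}
    (hρ : IsDensity ρ) (hσ : IsDensity σ) (h : dM M ρ σ = 0) {P : PMeas d} (hP : P ∈ M) :
    dE P ρ σ = 0 := by
  have hle : dE P ρ σ ≤ dM M ρ σ :=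
    le_csSup (dM_bddAbove hM hρ hσ) ⟨P, hP, rfl⟩
  rw [h] at hle
  exact le_antisymm hle dE_nonneg

lemma trace_eq_of_dE_zero {P : PMeas d} {ρ σ : Matrix d d ℂ} (h : dE P ρ σ = 0) (i : Fin P.m) :
    (P.E i * ρ).trace = (P.E i * σ).trace := by
  unfold dE at h
  have hsum : ∑ j, ‖(P.E j * ρ).trace - (P.E j * σ).trace‖ = 0 := by linarith
  have := (Finset.sum_eq_zero_iff_of_nonneg
    (fun j _ => norm_nonneg _)).mp hsum i (Finset.mem_univ i)
  rwa [norm_eq_zero, sub_eq_zero] at this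

variable {Agent Cmd : Type}

lemma run_cons (S : QSystem Agent Cmd d) (p : Agent × Cmd) (γ : List (Agent × Cmd))
    (ρ : Matrix d d ℂ) : S.run (p :: γ) ρ = S.run γ (S.Ecmd p.1 p.2 ρ) := rfl

lemma run_append (S : QSystem Agent Cmd d) (α β : List (Agent × Cmd)) (ρ : Matrix d d ℂ) :
    S.run (α ++ β) ρ = S.run β (S.run α ρ) := List.foldl_append

lemma valid_cons {S : QSystem Agent Cmd d} {p : Agent × Cmd} {γ : List (Agent × Cmd)}
    (hp : p.1 ∈ S.A ∧ p.2 ∈ S.C) (hγ : S.Valid γ) : S.Valid (p :: γ) := by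
  intro q hq
  rcases List.mem_cons.mp hq with h | h
  · exact h ▸ hp
  · exact hγ q h

lemma valid_append {S : QSystem Agent Cmd d} {α β : List (Agent × Cmd)}
    (hα : S.Valid α) (hβ : S.Valid β) : S.Valid (α ++ β) := by
  intro q hq
  rcases List.mem_append.mp hq with h | h
  · exact hα q h
  · exact hβ q h

lemma valid_purge {S : QSystem Agent Cmd d} (G : Set Agent) (D : Set Cmd)
    {α : List (Agent × Cmd)} (hα : S.Valid α) : S.Valid (purge G D α) := by
  induction α with
  | nil => exact hα
  | cons p rest ih =>
    have hrest : S.Valid rest := fun q hq => hα q (List.mem_cons_of_mem _ hq)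
    unfold purge
    split
    · exact ih hrest
    · exact valid_cons (hα p (List.mem_cons_self)) (ih hrest)

lemma purge_cons (G : Set Agent) (D : Set Cmd) (p : Agent × Cmd) (rest : List (Agent × Cmd)) :
    purge G D (p :: rest)
      = if p.1 ∈ G ∧ p.2 ∈ D then purge G D rest else p :: purge G D rest := rfl

lemma purge_append (G : Set Agent) (D : Set Cmd) (α β : List (Agent × Cmd)) :
    purge G D (α ++ β) = purge G D α ++ purge G D β := by
  induction α with
  | nil => rfl
  | cons p rest ih =>
    rw [List.cons_append, purge_cons, purge_cons]
    split
    · exact ih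
    · rw [ih, List.cons_append]

lemma run_density {S : QSystem Agent Cmd d} (hS : S.WellFormed) {α : List (Agent × Cmd)}
    (hα : S.Valid α) {ρ : Matrix d d ℂ} (hρ : IsDensity ρ) : IsDensity (S.run α ρ) := by
  induction α generalizing ρ with
  | nil => exact hρ
  | cons p rest ih =>
    rw [run_cons]
    have hp := hα p (List.mem_cons_self)
    have hop := hS.2.1 p.1 hp.1 p.2 hp.2
    exact ih (fun q hq => hα q (List.mem_cons_of_mem _ hq))
      ⟨hop.2.1 ρ hρ.1, by rw [hop.2.2, hρ.2]⟩

end UnwindAux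

/-- **Partial completeness of Unwinding I.** If `K(𝕊,↝) = 0`, then there is a family of
equivalence relations on reachable density operators satisfying step consistency,
observation consistency and local respect of the policy. -/
theorem partial_completeness_unwinding_I {Agent Cmd d : Type}
    [Fintype d] [DecidableEq d] [Nonempty d]
    (S : QSystem Agent Cmd d) (hS : S.WellFormed)
    (pol : Agent → Agent → Prop) (hpol : ∀ a ∈ S.A, pol a a)
    (hsec : Kdeg S pol = 0) :
    ∃ sim : Agent → Matrix d d ℂ → Matrix d d ℂ → Prop,
      (∀ a ∈ S.A, ∀ ρ, S.Reachable ρ → sim a ρ ρ) ∧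
      (∀ a ∈ S.A, ∀ ρ σ, S.Reachable ρ → S.Reachable σ →
        sim a ρ σ → sim a σ ρ) ∧
      (∀ a ∈ S.A, ∀ ρ σ τ, S.Reachable ρ → S.Reachable σ → S.Reachable τ →
        sim a ρ σ → sim a σ τ → sim a ρ τ) ∧
      (∀ a ∈ S.A, ∀ b ∈ S.A, ∀ c ∈ S.C, ∀ ρ σ, S.Reachable ρ → S.Reachable σ →
        sim a ρ σ → sim a (S.Ecmd b c ρ) (S.Ecmd b c σ)) ∧
      (∀ a ∈ S.A, ∀ ρ σ, S.Reachable ρ → S.Reachable σ →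
        sim a ρ σ → dM (S.M a) ρ σ = 0) ∧
      (∀ a ∈ S.A, ∀ b ∈ S.A, ¬ pol b a → ∀ c ∈ S.C, ∀ ρ, S.Reachable ρ →
        sim a ρ (S.Ecmd b c ρ)) := by
  classical
  open UnwindAux in
  -- the key consequence of security: measurement statistics agree with purged runs
  have hdens0 : IsDensity S.ρ0 := hS.1
  have hrd : ∀ {α : List (Agent × Cmd)}, S.Valid α → IsDensity (S.run α S.ρ0) :=
    fun hα => run_density hS hα hdens0
  have key : ∀ a ∈ S.A, ∀ α : List (Agent × Cmd), S.Valid α →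
      dM (S.M a) (S.run α S.ρ0) (S.run (purge (nabla pol a) Set.univ α) S.ρ0) = 0 := by
    intro a ha α hα
    set x := dM (S.M a) (S.run α S.ρ0) (S.run (purge (nabla pol a) Set.univ α) S.ρ0) with hx
    have hmem : x ∈ { x | ∃ a ∈ S.A, ∃ α, S.Valid α ∧
        x = dM (S.M a) (S.run α S.ρ0) (S.run (purge (nabla pol a) Set.univ α) S.ρ0) } :=
      ⟨a, ha, α, hα, rfl⟩
    have hbdd : BddAbove { x | ∃ a ∈ S.A, ∃ α, S.Valid α ∧
        x = dM (S.M a) (S.run α S.ρ0) (S.run (purge (nabla pol a) Set.univ α) S.ρ0) } := by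
      refine ⟨1, fun y hy => ?_⟩
      obtain ⟨b, hb, β, hβ, rfl⟩ := hy
      exact dM_le_one (fun P hP => hS.2.2 b hb P hP) (hrd hβ)
        (hrd (valid_purge _ _ hβ))
    have hle : x ≤ Kdeg S pol := le_csSup hbdd hmem
    rw [hsec] at hle
    exact le_antisymm hle dM_nonneg
  -- traces after purged runs agree with traces after full runs
  have keytr : ∀ a ∈ S.A, ∀ α : List (Agent × Cmd), S.Valid α → ∀ P ∈ S.M a, ∀ i,
      ((P.E i) * S.run α S.ρ0).trace
        = ((P.E i) * S.run (purge (nabla pol a) Set.univ α) S.ρ0).trace := by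
    intro a ha α hα P hP i
    exact trace_eq_of_dE_zero
      (dE_eq_zero_of_dM (fun Q hQ => hS.2.2 a ha Q hQ) (hrd hα)
        (hrd (valid_purge _ _ hα)) (key a ha α hα) hP) i
  refine ⟨fun a ρ σ => ∀ γ, S.Valid γ → ∀ P ∈ S.M a, ∀ i,
      ((P.E i) * S.run γ ρ).trace = ((P.E i) * S.run γ σ).trace,
    ?_, ?_, ?_, ?_, ?_, ?_⟩
  · intro a _ ρ _ γ _ P _ i; rfl
  · intro a _ ρ σ _ _ h γ hγ P hP i; exact (h γ hγ P hP i).symm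
  · intro a _ ρ σ τ _ _ _ h1 h2 γ hγ P hP i
    exact (h1 γ hγ P hP i).trans (h2 γ hγ P hP i)
  · intro a _ b hb c hc ρ σ _ _ h γ hγ P hP i
    have hγ' : S.Valid ((b, c) :: γ) := valid_cons ⟨hb, hc⟩ hγ
    have e1 : S.run γ (S.Ecmd b c ρ) = S.run ((b, c) :: γ) ρ := rfl
    have e2 : S.run γ (S.Ecmd b c σ) = S.run ((b, c) :: γ) σ := rfl
    rw [e1, e2]
    exact h ((b, c) :: γ) hγ' P hP i
  · intro a _ ρ σ _ _ h
    have hz : ∀ P ∈ S.M a, dE P ρ σ = 0 := by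
      intro P hP
      have := h [] (fun q hq => absurd hq List.not_mem_nil) P hP
      unfold dE
      rw [Finset.sum_eq_zero (fun i _ => by
        rw [show S.run [] ρ = ρ from rfl, show S.run [] σ = σ from rfl] at this
        rw [this i, sub_self, norm_zero]), mul_zero]
    refine le_antisymm (Real.sSup_le (fun x hx => ?_) le_rfl) dM_nonneg
    obtain ⟨P, hP, rfl⟩ := hx
    exact le_of_eq (hz P hP)
  · intro a ha b hb hba c hc ρ hρ γ hγ P hP i
    obtain ⟨α, hα, rfl⟩ := hρ
    have e1 : S.run γ (S.run α S.ρ0) = S.run (α ++ γ) S.ρ0 := (run_append S α γ S.ρ0).symm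
    have e2 : S.run γ (S.Ecmd b c (S.run α S.ρ0)) = S.run (α ++ (b, c) :: γ) S.ρ0 := by
      rw [run_append]; rfl
    rw [e1, e2]
    have hv1 : S.Valid (α ++ γ) := valid_append hα hγ
    have hv2 : S.Valid (α ++ (b, c) :: γ) := valid_append hα (valid_cons ⟨hb, hc⟩ hγ)
    have hpurge : purge (nabla pol a) Set.univ (α ++ γ)
        = purge (nabla pol a) Set.univ (α ++ (b, c) :: γ) := by
      rw [purge_append, purge_append]
      congr 1
      rw [purge_cons, if_pos ⟨hba, Set.mem_univ c⟩]
    rw [keytr a ha (α ++ γ) hv1 P hP i, keytr a ha (α ++ (b, c) :: γ) hv2 P hP i, hpurge]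


end
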